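/- Assume v lies in S (so M_v < 0), and let x be a nonzero element of L with v(x) <= 0. Then either Exc(x) holds, or the sequence min(0, v(phi^n(x)))/q^(r*n) converges to a limit V satisfying V <= M_v/q^r. (Lemmas 2.6 and 2.7 of the paper: if x is not in the exceptional set then the local height of x is at least -M_v/q^r up to the normalization factor.) -/

import Mathlib

open Filter Topology Finset

universe u

section Drinfeld

variable {L : Type u} [Field L] {k : Type*} [Field k]

/-- The integer value of the valuation `v` at `y` (junk value `0` at `y = 0`). -/
noncomputable def vz (v : L → WithTop ℤ) (y : L) : ℤ := (v y).untopD 0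

/-- `v : L → ℤ ∪ {∞}` is a normalized discrete valuation: `v 0 = ∞`, `v` is finite and
surjective onto `ℤ` on nonzero elements, `v (x * y) = v x + v y` and
`v (x + y) ≥ min (v x) (v y)`. -/
structure IsDVal (v : L → WithTop ℤ) : Prop where
  map_zero : v 0 = ⊤
  ne_top : ∀ x : L, x ≠ 0 → v x ≠ ⊤
  map_mul : ∀ x y : L, v (x * y) = v x + v y
  add_min : ∀ x y : L, min (v x) (v y) ≤ v (x + y)
  surj : ∀ n : ℤ, ∃ x : L, v x = (n : WithTop ℤ)

/-- `res : L → k` restricted to the valuation ring of `v` is the quotient map onto the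
residue field `k` of `v`. -/
structure IsResidue (v : L → WithTop ℤ) (res : L → k) : Prop where
  map_one : res 1 = 1
  map_add : ∀ x y : L, 0 ≤ v x → 0 ≤ v y → res (x + y) = res x + res y
  map_mul : ∀ x y : L, 0 ≤ v x → 0 ≤ v y → res (x * y) = res x * res y
  eq_zero_iff : ∀ x : L, 0 ≤ v x → (res x = 0 ↔ 0 < v x)
  surj : ∀ c : k, ∃ x : L, 0 ≤ v x ∧ res x = c

/-- The angular component of `y` at `v`, with respect to the uniformizer `π` and the
residue map `res`: the residue of `y * π ^ (-v y)`. -/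
noncomputable def ac (v : L → WithTop ℤ) (π : L) (res : L → k) (y : L) : k :=
  res (y * π ^ (-(vz v y)))

/-- The `F_q`-linear map `φ(x) = ∑_{i=r₀}^{r} a i * x^(q^i)`. -/
noncomputable def phiMap (q r₀ r : ℕ) (a : ℕ → L) (x : L) : L :=
  ∑ i ∈ Finset.Icc r₀ r, a i * x ^ q ^ i

/-- The set `P_v ⊆ ℚ` of possible exceptional valuations:
`(v(a i) - v(a j))/(q^j - q^i)` for `r₀ ≤ i < j ≤ r` with `a i ≠ 0 ≠ a j`, together with `0`. -/
def Pset (q : ℕ) (v : L → WithTop ℤ) (r₀ r : ℕ) (a : ℕ → L) : Set ℚ :=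
  {0} ∪ {α : ℚ | ∃ i j : ℕ, r₀ ≤ i ∧ i < j ∧ j ≤ r ∧ a i ≠ 0 ∧ a j ≠ 0 ∧
      α = ((vz v (a i) : ℚ) - (vz v (a j) : ℚ)) / ((q : ℚ) ^ j - (q : ℚ) ^ i)}

/-- The set `J(α)` of indices where `v(a i) + q^i * α` attains its minimum. -/
def Jset (q : ℕ) (v : L → WithTop ℤ) (r₀ r : ℕ) (a : ℕ → L) (α : ℚ) : Set ℕ :=
  {i : ℕ | r₀ ≤ i ∧ i ≤ r ∧ a i ≠ 0 ∧
    ∀ j : ℕ, r₀ ≤ j → j ≤ r → a j ≠ 0 →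
      (vz v (a i) : ℚ) + (q : ℚ) ^ i * α ≤ (vz v (a j) : ℚ) + (q : ℚ) ^ j * α}

open scoped Classical in
/-- The set `R_v(α) ⊆ k_v`: `1` together with the nonzero roots of
`∑_{i ∈ J(α)} ac(a i) * X^(q^i)`. -/
noncomputable def Rset (q : ℕ) (v : L → WithTop ℤ) (π : L) (res : L → k)
    (r₀ r : ℕ) (a : ℕ → L) (α : ℚ) : Set k :=
  {1} ∪ {γ : k | γ ≠ 0 ∧
    ∑ i ∈ Finset.Icc r₀ r,
      (if i ∈ Jset q v r₀ r a α then ac v π res (a i) * γ ^ q ^ i else 0) = 0}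

/-- The exceptional condition `Exc(y)`: `v y ∈ P_v` and `ac y ∈ R_v(v y)`. -/
def Exc (q : ℕ) (v : L → WithTop ℤ) (π : L) (res : L → k)
    (r₀ r : ℕ) (a : ℕ → L) (y : L) : Prop :=
  ((vz v y : ℚ) ∈ Pset q v r₀ r a) ∧ ac v π res y ∈ Rset q v π res r₀ r a ((vz v y : ℚ))

/-- The sequence `min(0, v(φⁿ x)) / q^(r n)` whose limit is minus the local height of `x`. -/
noncomputable def locSeq (q r : ℕ) (v : L → WithTop ℤ) (φ : L → L) (x : L) (n : ℕ) : ℝ :=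
  ((min 0 (vz v (φ^[n] x)) : ℤ) : ℝ) / (q : ℝ) ^ (r * n)


variable {v : L → WithTop ℤ}

lemma vz_eq (hv : IsDVal v) {y : L} (hy : y ≠ 0) : v y = (vz v y : WithTop ℤ) := by
  obtain ⟨n, hn⟩ := WithTop.ne_top_iff_exists.mp (hv.ne_top y hy)
  rw [vz, ← hn, WithTop.untopD_coe]

lemma v_one (hv : IsDVal v) : v 1 = 0 := by
  have h := hv.map_mul 1 1
  rw [one_mul] at h
  rw [vz_eq hv (one_ne_zero (α := L))] at h ⊢
  norm_cast at h ⊢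
  omega

lemma ne_zero_of_v_ne_top (hv : IsDVal v) {y : L} (h : v y ≠ ⊤) : y ≠ 0 := by
  intro h0; rw [h0, hv.map_zero] at h; exact h rfl

lemma vz_mul (hv : IsDVal v) {y z : L} (hy : y ≠ 0) (hz : z ≠ 0) :
    vz v (y * z) = vz v y + vz v z := by
  have h := hv.map_mul y z
  rw [vz_eq hv hy, vz_eq hv hz, vz_eq hv (mul_ne_zero hy hz)] at h
  exact_mod_cast h

lemma vz_pow (hv : IsDVal v) {y : L} (hy : y ≠ 0) (n : ℕ) :
    vz v (y ^ n) = n * vz v y := by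
  induction n with
  | zero => simp [vz, pow_zero, v_one hv]
  | succ n ih =>
    rw [pow_succ, vz_mul hv (pow_ne_zero _ hy) hy, ih]; push_cast; ring

lemma vz_inv (hv : IsDVal v) {y : L} (hy : y ≠ 0) : vz v (y⁻¹) = - vz v y := by
  have h := hv.map_mul y y⁻¹
  rw [mul_inv_cancel₀ hy, v_one hv, vz_eq hv hy, vz_eq hv (inv_ne_zero hy)] at h
  have : (0:ℤ) = vz v y + vz v (y⁻¹) := by exact_mod_cast h
  omega

lemma vz_zpow (hv : IsDVal v) {y : L} (hy : y ≠ 0) (n : ℤ) :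
    vz v (y ^ n) = n * vz v y := by
  cases n with
  | ofNat m => rw [Int.ofNat_eq_coe, zpow_natCast, vz_pow hv hy]
  | negSucc m =>
    rw [zpow_negSucc, vz_inv hv (pow_ne_zero _ hy), vz_pow hv hy, Int.negSucc_eq]
    push_cast; ring

lemma v_zpow (hv : IsDVal v) {y : L} (hy : y ≠ 0) (n : ℤ) :
    v (y ^ n) = ((n * vz v y : ℤ) : WithTop ℤ) := by
  rw [vz_eq hv (zpow_ne_zero n hy), vz_zpow hv hy]

lemma pi_ne_zero (hv : IsDVal v) {π : L} (hπ : v π = 1) : π ≠ 0 :=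
  ne_zero_of_v_ne_top hv (by rw [hπ]; exact (by decide : (1 : WithTop ℤ) ≠ ⊤))

lemma vz_pi (hv : IsDVal v) {π : L} (hπ : v π = 1) : vz v π = 1 := by
  have := vz_eq hv (pi_ne_zero hv hπ)
  rw [hπ] at this
  exact_mod_cast this.symm

lemma v_pi_zpow (hv : IsDVal v) {π : L} (hπ : v π = 1) (n : ℤ) :
    v (π ^ n) = (n : WithTop ℤ) := by
  rw [v_zpow hv (pi_ne_zero hv hπ) n, vz_pi hv hπ, mul_one]

lemma v_sum_ge (hv : IsDVal v) {ι : Type*} (s : Finset ι) (f : ι → L) (c : WithTop ℤ)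
    (h : ∀ i ∈ s, c ≤ v (f i)) : c ≤ v (∑ i ∈ s, f i) := by
  induction s using Finset.cons_induction with
  | empty => simp [hv.map_zero]
  | cons i s hi ih =>
    rw [Finset.sum_cons]
    refine le_trans (le_min (h i (Finset.mem_cons_self i s)) ?_) (hv.add_min _ _)
    exact ih fun j hj => h j (Finset.mem_cons_of_mem hj)

lemma v_neg (hv : IsDVal v) (y : L) : v (-y) = v y := by
  rcases eq_or_ne y 0 with rfl | hy
  · rw [neg_zero]
  · have h1 : v (-1 : L) = 0 := by
      have h := hv.map_mul (-1) (-1)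
      rw [neg_mul_neg, one_mul, v_one hv] at h
      rw [vz_eq hv (neg_ne_zero.mpr (one_ne_zero (α := L)))] at h ⊢
      norm_cast at h ⊢; omega
    calc v (-y) = v ((-1) * y) := by ring_nf
    _ = v y := by rw [hv.map_mul, h1, zero_add]

lemma v_add_eq_left (hv : IsDVal v) {s t : L} (h : v s < v t) : v (s + t) = v s := by
  have h1 : v s ≤ v (s + t) := le_trans (by simp [le_of_lt h]) (hv.add_min s t)
  rcases lt_or_eq_of_le h1 with h2 | h2
  · exfalso
    have h3 : min (v (s+t)) (v (-t)) ≤ v ((s+t) + (-t)) := hv.add_min _ _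
    rw [add_neg_cancel_right, v_neg hv] at h3
    exact absurd h3 (not_le.mpr (lt_min h2 h))
  · exact h2.symm

variable {res : L → k} {π : L}

lemma res_zero (hv : IsDVal v) (hres : IsResidue v res) : res 0 = 0 := by
  rw [(hres.eq_zero_iff 0 (by rw [hv.map_zero]; exact le_top)), hv.map_zero]
  exact (by decide : (0 : WithTop ℤ) < ⊤)

lemma res_of_pos (hres : IsResidue v res) {y : L} (h : 0 < v y) : res y = 0 :=
  (hres.eq_zero_iff y (le_of_lt h)).mpr h

lemma v_pow_nonneg (hv : IsDVal v) {y : L} (h : 0 ≤ v y) (n : ℕ) : 0 ≤ v (y ^ n) := by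
  induction n with
  | zero => rw [pow_zero, v_one hv]
  | succ n ih =>
    rw [pow_succ, hv.map_mul]
    exact add_nonneg ih h

lemma res_pow (hv : IsDVal v) (hres : IsResidue v res) {y : L} (h : 0 ≤ v y) (n : ℕ) :
    res (y ^ n) = (res y) ^ n := by
  induction n with
  | zero => rw [pow_zero, pow_zero, hres.map_one]
  | succ n ih => rw [pow_succ, pow_succ, hres.map_mul _ _ (v_pow_nonneg hv h n) h, ih]

lemma res_sum (hv : IsDVal v) (hres : IsResidue v res) {ι : Type*} (s : Finset ι) (f : ι → L)
    (h : ∀ i ∈ s, 0 ≤ v (f i)) : res (∑ i ∈ s, f i) = ∑ i ∈ s, res (f i) := by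
  induction s using Finset.cons_induction with
  | empty => simp [res_zero hv hres]
  | cons i s hi ih =>
    rw [Finset.sum_cons, Finset.sum_cons,
      hres.map_add _ _ (h i (Finset.mem_cons_self i s))
        (v_sum_ge hv s f 0 fun j hj => h j (Finset.mem_cons_of_mem hj)),
      ih fun j hj => h j (Finset.mem_cons_of_mem hj)]

lemma v_unit_part (hv : IsDVal v) (hπ : v π = 1) {y : L} (hy : y ≠ 0) :
    v (y * π ^ (-(vz v y))) = 0 := by
  rw [hv.map_mul, vz_eq hv hy, v_pi_zpow hv hπ]
  norm_cast; ring

lemma ac_ne_zero (hv : IsDVal v) (hπ : v π = 1) (hres : IsResidue v res) {y : L} (hy : y ≠ 0) :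
    ac v π res y ≠ 0 := by
  intro h0
  have := (hres.eq_zero_iff _ (le_of_eq (v_unit_part hv hπ hy).symm)).mp h0
  rw [v_unit_part hv hπ hy] at this
  exact lt_irrefl _ this

lemma res_shift (hv : IsDVal v) (hπ : v π = 1) (hres : IsResidue v res) {y : L} {m : ℤ}
    (h : (m : WithTop ℤ) ≤ v y) :
    res (y * π ^ (-m)) = if v y = (m : WithTop ℤ) then ac v π res y else 0 := by
  rcases eq_or_ne y 0 with rfl | hy
  · rw [zero_mul, res_zero hv hres, if_neg (by rw [hv.map_zero]; exact fun h => WithTop.coe_ne_top h.symm)]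
  · rcases eq_or_lt_of_le h with h1 | h1
    · rw [if_pos h1.symm, ac]
      congr 2
      have : vz v y = m := by rw [vz_eq hv hy] at h1; exact_mod_cast h1.symm
      rw [this]
    · rw [if_neg (by exact fun hh => absurd hh (ne_of_gt h1))]
      refine res_of_pos hres ?_
      rw [hv.map_mul, v_pi_zpow hv hπ, vz_eq hv hy]
      rw [vz_eq hv hy] at h1
      have h2 : m < vz v y := by exact_mod_cast h1
      have h3 : (0:ℤ) < vz v y + (-m) := by omega
      exact_mod_cast h3

lemma ac_mul (hv : IsDVal v) (hπ : v π = 1) (hres : IsResidue v res) {y z : L}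
    (hy : y ≠ 0) (hz : z ≠ 0) : ac v π res (y * z) = ac v π res y * ac v π res z := by
  rw [ac, ac, ac, vz_mul hv hy hz]
  have : y * z * π ^ (-(vz v y + vz v z)) = (y * π ^ (-(vz v y))) * (z * π ^ (-(vz v z))) := by
    rw [neg_add, zpow_add₀ (pi_ne_zero hv hπ)]; ring
  rw [this, hres.map_mul _ _ (le_of_eq (v_unit_part hv hπ hy).symm) (le_of_eq (v_unit_part hv hπ hz).symm)]

lemma ac_pow (hv : IsDVal v) (hπ : v π = 1) (hres : IsResidue v res) {y : L}
    (hy : y ≠ 0) (n : ℕ) : ac v π res (y ^ n) = (ac v π res y) ^ n := by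
  induction n with
  | zero => simp [ac, vz, v_one hv, hres.map_one]
  | succ n ih => rw [pow_succ, pow_succ, ac_mul hv hπ hres (pow_ne_zero _ hy) hy, ih]

open scoped Classical in
lemma key_sum (hv : IsDVal v) (hπ : v π = 1) (hres : IsResidue v res)
    {ι : Type*} (s : Finset ι) (f : ι → L) (m : ℤ)
    (h : ∀ i ∈ s, (m : WithTop ℤ) ≤ v (f i))
    (hS : (∑ i ∈ s, if v (f i) = (m : WithTop ℤ) then ac v π res (f i) else 0) ≠ 0) :
    v (∑ i ∈ s, f i) = (m : WithTop ℤ) ∧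
      ac v π res (∑ i ∈ s, f i) =
        ∑ i ∈ s, if v (f i) = (m : WithTop ℤ) then ac v π res (f i) else 0 := by
  set T := ∑ i ∈ s, f i with hT
  have hres_shift : res (T * π ^ (-m)) =
      ∑ i ∈ s, if v (f i) = (m : WithTop ℤ) then ac v π res (f i) else 0 := by
    have hdist : T * π ^ (-m) = ∑ i ∈ s, f i * π ^ (-m) := by rw [hT, Finset.sum_mul]
    have hnn : ∀ i ∈ s, 0 ≤ v (f i * π ^ (-m)) := by
      intro i hi
      rw [hv.map_mul, v_pi_zpow hv hπ]
      calc (0 : WithTop ℤ) = (m : WithTop ℤ) + ((-m : ℤ) : WithTop ℤ) := by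
            norm_cast; ring
        _ ≤ v (f i) + ((-m : ℤ) : WithTop ℤ) := add_le_add_left (h i hi) _
    rw [hdist, res_sum hv hres s _ hnn]
    exact Finset.sum_congr rfl fun i hi => res_shift hv hπ hres (h i hi)
  have hTm : (m : WithTop ℤ) ≤ v T := v_sum_ge hv s f _ h
  have hTne : T ≠ 0 := by
    intro h0
    rw [h0, zero_mul, res_zero hv hres] at hres_shift
    exact hS hres_shift.symm
  have hvT : v T = (m : WithTop ℤ) := by
    rcases eq_or_lt_of_le hTm with h1 | h1
    · exact h1.symm
    · exfalso
      have hpos : 0 < v (T * π ^ (-m)) := by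
        rw [hv.map_mul, v_pi_zpow hv hπ, vz_eq hv hTne]
        rw [vz_eq hv hTne] at h1
        have h2 : m < vz v T := by exact_mod_cast h1
        have h3 : (0:ℤ) < vz v T + (-m) := by omega
        exact_mod_cast h3
      exact hS (hres_shift.symm.trans (res_of_pos hres hpos))
  refine ⟨hvT, ?_⟩
  rw [← hres_shift, ac]
  congr 2
  have : vz v T = m := by
    rw [vz_eq hv hTne] at hvT; exact_mod_cast hvT
  rw [this]

lemma term_val (hv : IsDVal v) {a : ℕ → L} {y : L} (hy : y ≠ 0) {i q : ℕ} (hai : a i ≠ 0) :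
    v (a i * y ^ q ^ i) = ((vz v (a i) + (q : ℤ) ^ i * vz v y : ℤ) : WithTop ℤ) := by
  rw [vz_eq hv (mul_ne_zero hai (pow_ne_zero _ hy)), vz_mul hv hai (pow_ne_zero _ hy),
    vz_pow hv hy]
  push_cast
  ring_nf

open scoped Classical in
lemma step (hv : IsDVal v) (hπ : v π = 1) (hres : IsResidue v res)
    {q r₀ r : ℕ} (hq2 : 2 ≤ q) {a : ℕ → L}
    {x : L} (hx : x ≠ 0) (hnot : ¬ Exc q v π res r₀ r a x)
    {m : ℤ}
    (hm_le : ∀ i, r₀ ≤ i → i ≤ r → a i ≠ 0 → m ≤ vz v (a i) + (q:ℤ) ^ i * vz v x)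
    (hm_eq : ∃ i, r₀ ≤ i ∧ i ≤ r ∧ a i ≠ 0 ∧ m = vz v (a i) + (q:ℤ) ^ i * vz v x) :
    v (phiMap q r₀ r a x) = (m : WithTop ℤ) ∧
      ac v π res (phiMap q r₀ r a x) =
        ∑ i ∈ Finset.Icc r₀ r,
          (if i ∈ Jset q v r₀ r a (vz v x : ℚ) then
            ac v π res (a i) * (ac v π res x) ^ q ^ i else 0) := by
  set X := vz v x with hX
  set f : ℕ → L := fun i => a i * x ^ q ^ i with hf
  have hfv : ∀ i, a i ≠ 0 → v (f i) = ((vz v (a i) + (q:ℤ) ^ i * X : ℤ) : WithTop ℤ) :=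
    fun i hai => term_val hv hx hai
  have hf0 : ∀ i, a i = 0 → f i = 0 := fun i hai => by rw [hf]; simp [hai]
  have h : ∀ i ∈ Finset.Icc r₀ r, (m : WithTop ℤ) ≤ v (f i) := by
    intro i hi
    rcases eq_or_ne (a i) 0 with hai | hai
    · rw [hf0 i hai, hv.map_zero]; exact le_top
    · rw [hfv i hai]
      exact_mod_cast hm_le i (Finset.mem_Icc.mp hi).1 (Finset.mem_Icc.mp hi).2 hai
  -- the iff between attaining m and Jset membership
  have hJ : ∀ i ∈ Finset.Icc r₀ r,
      (v (f i) = (m : WithTop ℤ) ↔ i ∈ Jset q v r₀ r a (X : ℚ)) := by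
    intro i hi
    obtain ⟨hi1, hi2⟩ := Finset.mem_Icc.mp hi
    constructor
    · intro hvi
      have hai : a i ≠ 0 := by
        intro hai; rw [hf0 i hai, hv.map_zero] at hvi; exact WithTop.coe_ne_top hvi.symm
      have heq : vz v (a i) + (q:ℤ) ^ i * X = m := by
        rw [hfv i hai] at hvi; exact_mod_cast hvi
      refine ⟨hi1, hi2, hai, fun j hj1 hj2 haj => ?_⟩
      have := hm_le j hj1 hj2 haj
      have hgoal : vz v (a i) + (q:ℤ) ^ i * X ≤ vz v (a j) + (q:ℤ) ^ j * X := by omega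
      push_cast
      exact_mod_cast hgoal
    · rintro ⟨-, -, hai, hmin⟩
      obtain ⟨i₁, h1, h2, h3, h4⟩ := hm_eq
      have := hmin i₁ h1 h2 h3
      have hle : vz v (a i) + (q:ℤ) ^ i * X ≤ vz v (a i₁) + (q:ℤ) ^ i₁ * X := by
        exact_mod_cast this
      have heq : vz v (a i) + (q:ℤ) ^ i * X = m :=
        le_antisymm (by omega) (hm_le i hi1 hi2 hai)
      rw [hfv i hai]; exact_mod_cast heq
  have hSform : (∑ i ∈ Finset.Icc r₀ r, if v (f i) = (m : WithTop ℤ) then ac v π res (f i) else 0)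
      = ∑ i ∈ Finset.Icc r₀ r,
          (if i ∈ Jset q v r₀ r a (X : ℚ) then
            ac v π res (a i) * (ac v π res x) ^ q ^ i else 0) := by
    refine Finset.sum_congr rfl fun i hi => ?_
    by_cases hJi : i ∈ Jset q v r₀ r a (X : ℚ)
    · rw [if_pos hJi, if_pos ((hJ i hi).mpr hJi)]
      have hai : a i ≠ 0 := hJi.2.2.1
      rw [hf, ac_mul hv hπ hres hai (pow_ne_zero _ hx), ac_pow hv hπ hres hx]
    · rw [if_neg hJi, if_neg (fun hc => hJi ((hJ i hi).mp hc))]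
  by_cases hS : (∑ i ∈ Finset.Icc r₀ r, if v (f i) = (m : WithTop ℤ) then ac v π res (f i) else 0) = 0
  · -- cancellation: derive Exc x, contradiction
    exfalso
    apply hnot
    -- find the witness index and a second index in Jset
    obtain ⟨i₁, h1, h2, h3, h4⟩ := hm_eq
    have hi₁J : i₁ ∈ Jset q v r₀ r a (X : ℚ) :=
      (hJ i₁ (Finset.mem_Icc.mpr ⟨h1, h2⟩)).mp (by rw [hfv i₁ h3]; exact_mod_cast h4.symm)
    have hsecond : ∃ j ∈ Finset.Icc r₀ r, j ≠ i₁ ∧ j ∈ Jset q v r₀ r a (X : ℚ) := by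
      by_contra hcon
      push_neg at hcon
      rw [hSform] at hS
      rw [Finset.sum_eq_single_of_mem i₁ (Finset.mem_Icc.mpr ⟨h1, h2⟩)
        (fun j hj hne => if_neg (fun hc => (hcon j hj hne) hc))] at hS
      rw [if_pos hi₁J] at hS
      exact (mul_ne_zero (ac_ne_zero hv hπ hres h3)
        (pow_ne_zero _ (ac_ne_zero hv hπ hres hx))) hS
    obtain ⟨j, hjIcc, hjne, hjJ⟩ := hsecond
    -- both i₁ and j attain the minimum, giving the tie equation
    have htie : vz v (a i₁) + (q:ℤ) ^ i₁ * X = vz v (a j) + (q:ℤ) ^ j * X := by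
      have e1 := hi₁J.2.2.2 j hjJ.1 hjJ.2.1 hjJ.2.2.1
      have e2 := hjJ.2.2.2 i₁ h1 h2 h3
      have : (vz v (a i₁) : ℚ) + (q:ℚ) ^ i₁ * (X:ℚ) = (vz v (a j) : ℚ) + (q:ℚ) ^ j * (X:ℚ) :=
        le_antisymm e1 e2
      exact_mod_cast this
    have hPmem : ((X : ℚ)) ∈ Pset q v r₀ r a := by
      rcases lt_or_gt_of_ne hjne with hlt | hlt
      · -- j < i₁
        refine Or.inr ⟨j, i₁, hjJ.1, hlt, h2, hjJ.2.2.1, h3, ?_⟩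
        have hd : ((q:ℚ) ^ i₁ - (q:ℚ) ^ j) ≠ 0 := by
          have : (q:ℚ) ^ j < (q:ℚ) ^ i₁ :=
            pow_lt_pow_right₀ (by exact_mod_cast hq2) hlt
          linarith
        rw [eq_div_iff hd]
        have : ((q:ℤ) ^ i₁ - (q:ℤ) ^ j) * X = vz v (a j) - vz v (a i₁) := by
          linear_combination htie
        push_cast
        exact_mod_cast (by push_cast; linarith [ (by exact_mod_cast this :
          ((q:ℚ) ^ i₁ - (q:ℚ) ^ j) * (X:ℚ) = (vz v (a j) : ℚ) - (vz v (a i₁) : ℚ))] :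
          (X:ℚ) * ((q:ℚ) ^ i₁ - (q:ℚ) ^ j) = (vz v (a j) : ℚ) - (vz v (a i₁) : ℚ))
      · -- i₁ < j
        refine Or.inr ⟨i₁, j, h1, hlt, hjJ.2.1, h3, hjJ.2.2.1, ?_⟩
        have hd : ((q:ℚ) ^ j - (q:ℚ) ^ i₁) ≠ 0 := by
          have : (q:ℚ) ^ i₁ < (q:ℚ) ^ j :=
            pow_lt_pow_right₀ (by exact_mod_cast hq2) hlt
          linarith
        rw [eq_div_iff hd]
        have : ((q:ℤ) ^ j - (q:ℤ) ^ i₁) * X = vz v (a i₁) - vz v (a j) := by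
          linear_combination -htie
        exact_mod_cast (by push_cast; linarith [(by exact_mod_cast this :
          ((q:ℚ) ^ j - (q:ℚ) ^ i₁) * (X:ℚ) = (vz v (a i₁) : ℚ) - (vz v (a j) : ℚ))] :
          (X:ℚ) * ((q:ℚ) ^ j - (q:ℚ) ^ i₁) = (vz v (a i₁) : ℚ) - (vz v (a j) : ℚ))
    refine ⟨hPmem, Or.inr ⟨ac_ne_zero hv hπ hres hx, ?_⟩⟩
    rw [← hSform]
    exact hS
  · -- no cancellation: key_sum applies
    have hks := key_sum hv hπ hres (Finset.Icc r₀ r) f m h hS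
    rw [hSform] at hks
    exact hks

lemma pure_step (hv : IsDVal v) (hπ : v π = 1) (hres : IsResidue v res)
    {q r₀ r : ℕ} (hq2 : 2 ≤ q) (hr₀r : r₀ ≤ r) {a : ℕ → L} (har : a r = 1)
    {y : L} (hy : y ≠ 0)
    (hzone : ∀ i, r₀ ≤ i → i < r → a i ≠ 0 →
      ((q:ℤ) ^ r - (q:ℤ) ^ i) * vz v y < vz v (a i)) :
    v (phiMap q r₀ r a y) = (((q:ℤ) ^ r * vz v y : ℤ) : WithTop ℤ) := by
  classical
  set m : ℤ := (q:ℤ) ^ r * vz v y with hm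
  set f : ℕ → L := fun i => a i * y ^ q ^ i with hf
  have hfr : v (f r) = (m : WithTop ℤ) := by
    have : f r = y ^ q ^ r := by rw [hf]; simp [har]
    rw [this, vz_eq hv (pow_ne_zero _ hy), vz_pow hv hy, hm]
    push_cast; ring_nf
  have hflt : ∀ i, r₀ ≤ i → i < r → a i ≠ 0 → (m : WithTop ℤ) < v (f i) := by
    intro i h1 h2 hai
    rw [term_val hv hy hai]
    have : m < vz v (a i) + (q:ℤ) ^ i * vz v y := by
      have := hzone i h1 h2 hai
      nlinarith [this]
    exact_mod_cast this
  have h : ∀ i ∈ Finset.Icc r₀ r, (m : WithTop ℤ) ≤ v (f i) := by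
    intro i hi
    obtain ⟨h1, h2⟩ := Finset.mem_Icc.mp hi
    rcases eq_or_ne (a i) 0 with hai | hai
    · simp [hf, hai, hv.map_zero]
    · rcases eq_or_lt_of_le h2 with rfl | h3
      · exact le_of_eq hfr.symm
      · exact le_of_lt (hflt i h1 h3 hai)
  have hS : (∑ i ∈ Finset.Icc r₀ r, if v (f i) = (m : WithTop ℤ) then ac v π res (f i) else 0)
      = (ac v π res y) ^ q ^ r := by
    rw [Finset.sum_eq_single_of_mem r (Finset.mem_Icc.mpr ⟨hr₀r, le_refl r⟩)]
    · rw [if_pos hfr]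
      have : f r = y ^ q ^ r := by rw [hf]; simp [har]
      rw [this, ac_pow hv hπ hres hy]
    · intro j hj hne
      obtain ⟨h1, h2⟩ := Finset.mem_Icc.mp hj
      rcases eq_or_ne (a j) 0 with haj | haj
      · rw [if_neg]; rw [hf]; simp only [haj, zero_mul, hv.map_zero]
        exact fun hc => WithTop.coe_ne_top hc.symm
      · exact if_neg (fun hc => absurd hc (ne_of_gt (hflt j h1 (lt_of_le_of_ne h2 hne) haj)))
  have hSne : (∑ i ∈ Finset.Icc r₀ r, if v (f i) = (m : WithTop ℤ) then ac v π res (f i) else 0) ≠ 0 := by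
    rw [hS]; exact pow_ne_zero _ (ac_ne_zero hv hπ hres hy)
  exact (key_sum hv hπ hres (Finset.Icc r₀ r) f m h hSne).1

lemma pure_iter (hv : IsDVal v) (hπ : v π = 1) (hres : IsResidue v res)
    {q r₀ r : ℕ} (hq2 : 2 ≤ q) (hr₀r : r₀ ≤ r) {a : ℕ → L} (har : a r = 1)
    {y : L} (hy : y ≠ 0) (hneg : vz v y < 0)
    (hzone : ∀ i, r₀ ≤ i → i < r → a i ≠ 0 →
      ((q:ℤ) ^ r - (q:ℤ) ^ i) * vz v y < vz v (a i)) :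
    ∀ n : ℕ, (phiMap q r₀ r a)^[n] y ≠ 0 ∧
      vz v ((phiMap q r₀ r a)^[n] y) = (q:ℤ) ^ (r*n) * vz v y := by
  intro n
  induction n with
  | zero => simpa using hy
  | succ n ih =>
    obtain ⟨hzne, hzv⟩ := ih
    set z := (phiMap q r₀ r a)^[n] y with hz
    have hql : (1:ℤ) ≤ (q:ℤ) ^ (r*n) := one_le_pow₀ (by exact_mod_cast le_trans one_le_two hq2)
    have hzley : vz v z ≤ vz v y := by nlinarith [hzv, hql, hneg]
    have hzonez : ∀ i, r₀ ≤ i → i < r → a i ≠ 0 →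
        ((q:ℤ) ^ r - (q:ℤ) ^ i) * vz v z < vz v (a i) := by
      intro i h1 h2 hai
      have hfac : (0:ℤ) ≤ (q:ℤ) ^ r - (q:ℤ) ^ i := by
        have : (q:ℤ) ^ i ≤ (q:ℤ) ^ r :=
          pow_le_pow_right₀ (by exact_mod_cast le_trans one_le_two hq2) (le_of_lt h2)
        omega
      calc ((q:ℤ) ^ r - (q:ℤ) ^ i) * vz v z ≤ ((q:ℤ) ^ r - (q:ℤ) ^ i) * vz v y :=
            mul_le_mul_of_nonneg_left hzley hfac
        _ < vz v (a i) := hzone i h1 h2 hai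
    have hstep := pure_step hv hπ hres hq2 hr₀r har hzne hzonez
    rw [Function.iterate_succ_apply', ← hz]
    have hne : phiMap q r₀ r a z ≠ 0 :=
      ne_zero_of_v_ne_top hv (by rw [hstep]; exact WithTop.coe_ne_top)
    refine ⟨hne, ?_⟩
    have : vz v (phiMap q r₀ r a z) = (q:ℤ) ^ r * vz v z := by
      have := hstep
      rw [vz_eq hv hne] at this
      exact_mod_cast this
    rw [this, hzv, ← mul_assoc, ← pow_add]
    ring_nf

set_option maxHeartbeats 1000000 in
/-- Lemmas 2.6 and 2.7: if `v ∈ S` and `v(x) ≤ 0`, then either `Exc(x)` holds or the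
local-height sequence converges to a limit `V ≤ M_v / q^r`. -/
theorem statement4
    (p q : ℕ) (hp : p.Prime) (hq : ∃ s : ℕ, 0 < s ∧ q = p ^ s)
    [CharP L p] (F : Subfield L) (hF : Nat.card F = q)
    (v : L → WithTop ℤ) (hv : IsDVal v)
    (π : L) (hπ : v π = 1) (res : L → k) (hres : IsResidue v res)
    (r₀ r : ℕ) (hr1 : 1 ≤ r) (hr₀r : r₀ ≤ r)
    (a : ℕ → L) (har₀ : a r₀ ≠ 0) (har : a r = 1)
    (hS : ∃ i ∈ Finset.Icc r₀ (r - 1), v (a i) < 0)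
    (x : L) (hx : x ≠ 0) (hvx : v x ≤ 0) :
    Exc q v π res r₀ r a x ∨
    ∃ V : ℝ, Filter.Tendsto (locSeq q r v (phiMap q r₀ r a) x) Filter.atTop (nhds V) ∧
      ∀ i ∈ Finset.Icc r₀ (r - 1), a i ≠ 0 →
        V ≤ (vz v (a i) : ℝ) / (((q : ℝ) ^ r - (q : ℝ) ^ i) * (q : ℝ) ^ r) := by
  classical
  by_cases hexc : Exc q v π res r₀ r a x
  · exact Or.inl hexc
  right
  -- basic facts
  obtain ⟨s, hs, hqs⟩ := hq
  have hq2 : 2 ≤ q := by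
    calc 2 ≤ p := hp.two_le
    _ ≤ p ^ s := Nat.le_self_pow (by omega) p
    _ = q := hqs.symm
  set X := vz v x with hX
  have hX0 : X ≤ 0 := by
    rw [vz_eq hv hx] at hvx
    exact_mod_cast hvx
  obtain ⟨jS, hjSmem, hjSv⟩ := hS
  have hajS : a jS ≠ 0 := by
    intro h0
    rw [h0, hv.map_zero] at hjSv
    exact absurd hjSv (by simp)
  have hcjS : vz v (a jS) < 0 := by
    rw [vz_eq hv hajS] at hjSv
    exact_mod_cast hjSv
  obtain ⟨hjS1, hjS2⟩ := Finset.mem_Icc.mp hjSmem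
  have hjSr : jS < r := by omega
  -- the minimum m₁
  set t : Finset ℕ := (Finset.Icc r₀ r).filter (fun i => a i ≠ 0) with ht
  have htne : t.Nonempty := ⟨r, by
    rw [ht, Finset.mem_filter, Finset.mem_Icc]
    exact ⟨⟨hr₀r, le_refl r⟩, by rw [har]; exact one_ne_zero⟩⟩
  set m₁ : ℤ := t.inf' htne (fun i => vz v (a i) + (q:ℤ) ^ i * X) with hm₁
  have hm_le : ∀ i, r₀ ≤ i → i ≤ r → a i ≠ 0 → m₁ ≤ vz v (a i) + (q:ℤ) ^ i * X := by
    intro i h1 h2 hai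
    exact Finset.inf'_le _ (by rw [ht, Finset.mem_filter, Finset.mem_Icc]; exact ⟨⟨h1, h2⟩, hai⟩)
  have hm_eq : ∃ i, r₀ ≤ i ∧ i ≤ r ∧ a i ≠ 0 ∧ m₁ = vz v (a i) + (q:ℤ) ^ i * X := by
    obtain ⟨i, hi, hieq⟩ := Finset.exists_mem_eq_inf' htne (fun i => vz v (a i) + (q:ℤ) ^ i * X)
    rw [ht, Finset.mem_filter, Finset.mem_Icc] at hi
    exact ⟨i, hi.1.1, hi.1.2, hi.2, hieq⟩
  have hm₁neg : m₁ < 0 := by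
    have h1 := hm_le jS hjS1 (le_of_lt hjSr) hajS
    have h2 : (q:ℤ) ^ jS * X ≤ 0 :=
      mul_nonpos_of_nonneg_of_nonpos (pow_nonneg (by positivity) _) hX0
    omega
  have hm₁ci : ∀ i, r₀ ≤ i → i ≤ r → a i ≠ 0 → m₁ ≤ vz v (a i) := by
    intro i h1 h2 hai
    have h3 := hm_le i h1 h2 hai
    have h4 : (q:ℤ) ^ i * X ≤ 0 :=
      mul_nonpos_of_nonneg_of_nonpos (pow_nonneg (by positivity) _) hX0
    omega
  -- first step
  obtain ⟨hstep1, hac1⟩ := step hv hπ hres hq2 hx hexc hm_le hm_eq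
  set φ := phiMap q r₀ r a with hφ
  set y₁ := φ x with hy₁
  have hy₁ne : y₁ ≠ 0 := ne_zero_of_v_ne_top hv (by rw [hstep1]; exact WithTop.coe_ne_top)
  have hvy₁ : vz v y₁ = m₁ := by
    rw [vz_eq hv hy₁ne] at hstep1; exact_mod_cast hstep1
  -- the key claim
  have hkey : ∀ n : ℕ, 1 ≤ n → (φ^[n] x ≠ 0 ∧
      vz v (φ^[n] x) = (q:ℤ) ^ (r*(n-1)) * m₁) := by
    by_cases hzone : ∀ i, r₀ ≤ i → i < r → a i ≠ 0 →
        ((q:ℤ) ^ r - (q:ℤ) ^ i) * m₁ < vz v (a i)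
    · -- regular case : pure iteration from y₁
      have hzone' : ∀ i, r₀ ≤ i → i < r → a i ≠ 0 →
          ((q:ℤ) ^ r - (q:ℤ) ^ i) * vz v y₁ < vz v (a i) := by
        rw [hvy₁]; exact hzone
      have hiter := pure_iter hv hπ hres hq2 hr₀r har hy₁ne (by rw [hvy₁]; exact hm₁neg) hzone'
      intro n hn
      obtain ⟨m, rfl⟩ : ∃ m, n = m + 1 := ⟨n - 1, by omega⟩
      rw [Function.iterate_succ_apply, ← hy₁]
      obtain ⟨hne, heq⟩ := hiter m
      refine ⟨hne, ?_⟩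
      rw [heq, hvy₁]
      norm_num
    · -- edge case : q = 2, r = 1, X = 0
      push_neg at hzone
      obtain ⟨i₀, hi₀1, hi₀2, hai₀, hi₀le⟩ := hzone
      have hqr_pow : (q:ℤ) ^ i₀ < (q:ℤ) ^ r :=
        pow_lt_pow_right₀ (by exact_mod_cast hq2) hi₀2
      have hA1 : (1:ℤ) ≤ (q:ℤ) ^ r - (q:ℤ) ^ i₀ := by omega
      have hqi₀pos : (0:ℤ) < (q:ℤ) ^ i₀ := by positivity
      have hmle := hm_le i₀ hi₀1 (le_of_lt hi₀2) hai₀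
      -- squeeze
      have hsq1 : (1 - ((q:ℤ) ^ r - (q:ℤ) ^ i₀)) * m₁ ≤ (q:ℤ) ^ i₀ * X := by linarith
      have hsq2 : (q:ℤ) ^ i₀ * X ≤ 0 :=
        mul_nonpos_of_nonneg_of_nonpos (le_of_lt hqi₀pos) hX0
      have hsq3 : 0 ≤ (1 - ((q:ℤ) ^ r - (q:ℤ) ^ i₀)) * m₁ := by
        have h1 : (1 - ((q:ℤ) ^ r - (q:ℤ) ^ i₀)) ≤ 0 := by omega
        have := mul_nonneg (neg_nonneg.mpr h1) (neg_nonneg.mpr (le_of_lt hm₁neg))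
        nlinarith [this]
      have hz1 : (1 - ((q:ℤ) ^ r - (q:ℤ) ^ i₀)) * m₁ = 0 :=
        le_antisymm (hsq1.trans hsq2) hsq3
      have hAeq : (q:ℤ) ^ r - (q:ℤ) ^ i₀ = 1 := by
        rcases mul_eq_zero.mp hz1 with h | h
        · omega
        · omega
      have hXzero : X = 0 := by
        have hz2 : (q:ℤ) ^ i₀ * X = 0 := le_antisymm hsq2 (hz1 ▸ hsq1)
        rcases mul_eq_zero.mp hz2 with h | h
        · omega
        · exact h
      -- derive q = 2, r = 1, i₀ = 0
      have hnat : q ^ r = q ^ i₀ + 1 := by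
        have : (q:ℤ) ^ r = (q:ℤ) ^ i₀ + 1 := by omega
        exact_mod_cast this
      have hdvd : q ^ i₀ ∣ q ^ r := pow_dvd_pow q (le_of_lt hi₀2)
      have hi₀0 : q ^ i₀ = 1 := by
        have h := hdvd
        rw [hnat] at h
        exact Nat.dvd_one.mp ((Nat.dvd_add_right dvd_rfl).mp h)
      have hi₀z : i₀ = 0 := by
        by_contra hne
        have : q ^ i₀ ≥ q := Nat.le_self_pow hne q
        omega
      have hqr2 : q ^ r = 2 := by rw [hnat, hi₀z]; simp
      have hq2' : q = 2 := by
        have : q ≤ q ^ r := Nat.le_self_pow (by omega) q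
        omega
      have hr1' : r = 1 := by
        subst hq2'
        rcases Nat.lt_or_ge r 2 with h | h
        · omega
        · exfalso; have : 2 ^ 2 ≤ 2 ^ r := Nat.pow_le_pow_right (by norm_num) h; omega
      have hr₀0 : r₀ = 0 := by omega
      subst hq2' hr1' hr₀0 hi₀z
      -- now q = 2, r = 1, r₀ = 0, i₀ = 0, X = 0
      have hm₁c0 : m₁ = vz v (a 0) := by
        have h1 := hm₁ci 0 (le_refl 0) (by omega) hai₀
        rw [hAeq, one_mul] at hi₀le
        omega
      have hc1 : vz v (a 1) = 0 := by
        rw [har]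
        simp [vz, v_one hv]
      have ha1 : a 1 ≠ 0 := by rw [har]; exact one_ne_zero
      -- p = 2, so the residue field has characteristic 2
      have hp2 : p = 2 := by
        have h1 : p ≤ p ^ s := Nat.le_self_pow (by omega) p
        have h2 := hp.two_le
        omega
      subst hp2
      have hLchar : (1:L) + 1 = 0 := by
        have h0 : ((2:ℕ):L) = 0 := CharP.cast_eq_zero L 2
        push_cast at h0
        linear_combination h0
      have hk2 : (1:k) + 1 = 0 := by
        have h0 : res ((1:L)+1) = res 1 + res 1 :=
          hres.map_add 1 1 (by rw [v_one hv]) (by rw [v_one hv])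
        rw [hLchar, res_zero hv hres, hres.map_one] at h0
        exact h0.symm
      -- Jset at α = 0
      have hJ0 : 0 ∈ Jset 2 v 0 1 a ((X:ℚ)) := by
        refine ⟨le_refl 0, by omega, hai₀, fun j hj0 hj1 haj => ?_⟩
        rw [hXzero]
        push_cast
        simp only [mul_zero, add_zero]
        interval_cases j
        · exact le_refl _
        · rw [hc1]
          have h9 : vz v (a 0) ≤ (0:ℤ) := by omega
          exact_mod_cast h9
      have hJ1 : 1 ∉ Jset 2 v 0 1 a ((X:ℚ)) := by
        intro hmem
        have h1 := hmem.2.2.2 0 (le_refl 0) (by omega) hai₀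
        rw [hXzero] at h1
        push_cast at h1
        simp only [mul_zero, add_zero] at h1
        rw [hc1, ← hm₁c0] at h1
        exact absurd (by exact_mod_cast h1 : (0:ℤ) ≤ m₁) (not_le.mpr hm₁neg)
      -- angular component of y₁
      have hacy₁ : ac v π res y₁ = ac v π res (a 0) * ac v π res x := by
        rw [hac1, show Finset.Icc 0 1 = ({0, 1} : Finset ℕ) from rfl,
          Finset.sum_insert (by decide), Finset.sum_singleton,
          if_pos hJ0, if_neg hJ1, add_zero, pow_zero, pow_one]
      -- ac x ≠ 1 since Exc fails and X = 0
      have hP0 : ((X:ℚ)) ∈ Pset 2 v 0 1 a := by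
        rw [hXzero]
        exact Or.inl (by norm_num)
      have hγ1 : ac v π res x ≠ 1 := by
        intro h1
        exact hexc ⟨hP0, Or.inl h1⟩
      set A0 := ac v π res (a 0) with hA0
      set γ := ac v π res x with hγ
      have hA0ne : A0 ≠ 0 := ac_ne_zero hv hπ hres hai₀
      have hγne : γ ≠ 0 := ac_ne_zero hv hπ hres hx
      have h1γ : (1:k) + γ ≠ 0 := by
        intro hcon
        apply hγ1
        have h2 : γ = -1 := eq_neg_of_add_eq_zero_right hcon
        have h3 : (-1 : k) = 1 := neg_eq_of_add_eq_zero_left hk2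
        rw [h2, h3]
      -- second application of key_sum at y₁
      set f2 : ℕ → L := fun i => a i * y₁ ^ (2:ℕ) ^ i with hf2
      have hfe : f2 0 = a 0 * y₁ := by simp [hf2]
      have hfe1 : f2 1 = y₁ ^ (2:ℕ) := by simp [hf2, har]
      have hf0v : v (f2 0) = ((2 * m₁ : ℤ) : WithTop ℤ) := by
        rw [hfe, hv.map_mul, vz_eq hv hai₀, ← hm₁c0, hstep1]
        have h7 : (m₁ + m₁ : ℤ) = 2 * m₁ := by ring
        exact_mod_cast h7
      have hf1v : v (f2 1) = ((2 * m₁ : ℤ) : WithTop ℤ) := by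
        rw [hfe1, vz_eq hv (pow_ne_zero 2 hy₁ne), vz_pow hv hy₁ne, hvy₁]
        norm_cast
      have hIcc01 : Finset.Icc 0 1 = ({0, 1} : Finset ℕ) := rfl
      have hbound2 : ∀ i ∈ Finset.Icc 0 1, ((2*m₁ : ℤ) : WithTop ℤ) ≤ v (f2 i) := by
        intro i hi
        rw [hIcc01] at hi
        rcases Finset.mem_insert.mp hi with rfl | hi1
        · exact le_of_eq hf0v.symm
        · rw [Finset.mem_singleton.mp hi1]
          exact le_of_eq hf1v.symm
      have hacf0 : ac v π res (f2 0) = A0 * (A0 * γ) := by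
        rw [hfe, ac_mul hv hπ hres hai₀ hy₁ne, hacy₁]
      have hacf1 : ac v π res (f2 1) = (A0 * γ) * (A0 * γ) := by
        rw [hfe1, ac_pow hv hπ hres hy₁ne, hacy₁]
        ring
      have hS2 : (∑ i ∈ Finset.Icc 0 1,
          if v (f2 i) = ((2*m₁ : ℤ) : WithTop ℤ) then ac v π res (f2 i) else 0) ≠ 0 := by
        rw [hIcc01, Finset.sum_insert (by decide), Finset.sum_singleton,
          if_pos hf0v, if_pos hf1v, hacf0, hacf1]
        have : A0 * (A0 * γ) + (A0 * γ) * (A0 * γ) = A0 * A0 * γ * (1 + γ) := by ring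
        rw [this]
        exact mul_ne_zero (mul_ne_zero (mul_ne_zero hA0ne hA0ne) hγne) h1γ
      have hks2 := key_sum hv hπ hres (Finset.Icc 0 1) f2 (2*m₁) hbound2 hS2
      have hstep2 : v (φ y₁) = ((2*m₁ : ℤ) : WithTop ℤ) := by
        rw [hφ, phiMap]
        exact hks2.1
      set y₂ := φ y₁ with hy₂
      have hy₂ne : y₂ ≠ 0 := ne_zero_of_v_ne_top hv (by rw [hstep2]; exact WithTop.coe_ne_top)
      have hvy₂ : vz v y₂ = 2 * m₁ := by
        rw [vz_eq hv hy₂ne] at hstep2; exact_mod_cast hstep2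
      -- zone condition for y₂
      have hzone₂ : ∀ i, 0 ≤ i → i < 1 → a i ≠ 0 →
          (((2:ℕ):ℤ) ^ 1 - ((2:ℕ):ℤ) ^ i) * vz v y₂ < vz v (a i) := by
        intro i _ hi1 _
        interval_cases i
        rw [hvy₂, ← hm₁c0]
        push_cast
        nlinarith [hm₁neg]
      have hiter := pure_iter hv hπ hres (le_refl 2) (by omega) har hy₂ne
        (by rw [hvy₂]; omega) hzone₂
      intro n hn
      rcases Nat.lt_or_ge n 2 with h2 | h2
      · -- n = 1
        have hn1 : n = 1 := by omega
        subst hn1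
        rw [Function.iterate_one, ← hy₁]
        refine ⟨hy₁ne, ?_⟩
        rw [hvy₁]
        norm_num
      · -- n ≥ 2
        obtain ⟨m, rfl⟩ : ∃ m, n = m + 2 := ⟨n - 2, by omega⟩
        have hrw : φ^[m + 2] x = φ^[m] y₂ := by
          rw [show m + 2 = (m + 1) + 1 from rfl, Function.iterate_succ_apply,
            Function.iterate_succ_apply, ← hy₁, ← hy₂]
        rw [hrw]
        obtain ⟨hne, heq⟩ := hiter m
        refine ⟨hne, ?_⟩
        rw [heq, hvy₂]
        have h7 : 1 * (m + 2 - 1) = m + 1 := by omega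
        rw [h7, one_mul, pow_succ]
        ring
  -- conclusion : the sequence is eventually constant
  have hqRpos : (0:ℝ) < (q:ℝ) := by positivity
  have hqRpos' : (0:ℝ) < (q:ℝ) ^ r := by positivity
  have heval : ∀ n : ℕ, 1 ≤ n → locSeq q r v φ x n = (m₁ : ℝ) / (q:ℝ) ^ r := by
    intro n hn
    obtain ⟨hne, hval⟩ := hkey n hn
    have hneg : vz v (φ^[n] x) < 0 := by
      rw [hval]
      exact mul_neg_of_pos_of_neg (pow_pos (by positivity) _) hm₁neg
    rw [locSeq, min_eq_right (le_of_lt hneg), hval]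
    have hsplit : r * n = r * (n - 1) + r := by
      cases n with
      | zero => omega
      | succ m => simp [Nat.mul_succ]
    rw [hsplit, pow_add]
    push_cast
    rw [div_eq_div_iff (by positivity) (by positivity)]
    ring
  refine ⟨(m₁ : ℝ) / (q:ℝ) ^ r, ?_, ?_⟩
  · refine Filter.Tendsto.congr' ?_ tendsto_const_nhds
    filter_upwards [Filter.eventually_ge_atTop 1] with n hn
    exact (heval n hn).symm
  · intro i hi hai
    obtain ⟨hi1, hi2⟩ := Finset.mem_Icc.mp hi
    have hir : i < r := by omega
    have hm₁i : (m₁ : ℝ) ≤ (vz v (a i) : ℝ) := by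
      exact_mod_cast hm₁ci i hi1 (le_of_lt hir) hai
    have hqpow : (q:ℤ) ^ i < (q:ℤ) ^ r := pow_lt_pow_right₀ (by exact_mod_cast hq2) hir
    have hA : (1:ℝ) ≤ (q:ℝ) ^ r - (q:ℝ) ^ i := by
      have h1 : (q:ℤ) ^ i + 1 ≤ (q:ℤ) ^ r := Int.add_one_le_iff.mpr hqpow
      have h2 : ((q:ℝ)) ^ i + 1 ≤ ((q:ℝ)) ^ r := by exact_mod_cast h1
      linarith
    have hApos : (0:ℝ) < (q:ℝ) ^ r - (q:ℝ) ^ i := by linarith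
    rw [div_le_div_iff₀ hqRpos' (mul_pos hApos hqRpos')]
    have hm₁R : (m₁ : ℝ) < 0 := by exact_mod_cast hm₁neg
    have h5 : (m₁:ℝ) * ((q:ℝ) ^ r - (q:ℝ) ^ i) ≤ (vz v (a i) : ℝ) := by nlinarith
    calc (m₁:ℝ) * (((q:ℝ) ^ r - (q:ℝ) ^ i) * (q:ℝ) ^ r)
        = ((m₁:ℝ) * ((q:ℝ) ^ r - (q:ℝ) ^ i)) * (q:ℝ) ^ r := by ring
      _ ≤ (vz v (a i) : ℝ) * (q:ℝ) ^ r := mul_le_mul_of_nonneg_right h5 (le_of_lt hqRpos')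

end Drinfeld
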